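/- Fix b ≥ 0 and set N = 2b+1. For each subset S ⊆ {1,…,N} with |S| = b let C(S) be an element of a rational vector space, and for each subset T ⊆ {1,…,N} with |T| = b+1 define R(T) := ∑_{S ⊂ T, |S| = b} C(S). Then for every S with |S| = b, C(S) = ∑_{i=0}^{b} (-1)^{i+b} c_i^{-1} ∑_{|T|=b+1, |T∩S|=i} R(T), where c_i = (b+1)·C(b,i). -/

import Mathlib

open Finset

private lemma count_aux (b : ℕ) (S S' : Finset (Fin (2*b+1))) (hS : S.card = b)
    (hS' : S'.card = b) (i : ℕ) :
    (((Finset.powersetCard (b+1) (Finset.univ : Finset (Fin (2*b+1)))).filter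
        (fun T => (T ∩ S).card = i)).filter (fun T => S' ⊆ T)).card
    = (if i = (S' ∩ S).card + 1 then b - (S' ∩ S).card else 0)
      + (if i = (S' ∩ S).card then (S' ∩ S).card + 1 else 0) := by
  classical
  set j := (S' ∩ S).card with hj
  have hjb : j ≤ b := hS ▸ card_le_card inter_subset_right
  have hkey : ∀ x : Fin (2*b+1), x ∉ S' →
      ((insert x S') ∩ S).card = if x ∈ S then j + 1 else j := by
    intro x hx
    by_cases hxS : x ∈ S
    · rw [insert_inter_of_mem hxS, card_insert_of_notMem (fun h => hx (mem_of_mem_inter_left h)),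
        if_pos hxS]
    · rw [insert_inter_of_notMem hxS, if_neg hxS]
  have himg : (((powersetCard (b+1) (univ : Finset (Fin (2*b+1)))).filter
        (fun T => (T ∩ S).card = i)).filter (fun T => S' ⊆ T))
      = (S'ᶜ.filter (fun x => ((insert x S') ∩ S).card = i)).image (fun x => insert x S') := by
    ext T
    simp only [mem_filter, mem_powersetCard, mem_image, mem_compl]
    constructor
    · rintro ⟨⟨⟨-, hcard⟩, hi⟩, hsub⟩
      obtain ⟨x, hx, hT⟩ := Finset.exists_eq_insert_iff.2 ⟨hsub, by omega⟩
      exact ⟨x, ⟨hx, by rw [hT]; exact hi⟩, hT⟩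
    · rintro ⟨x, ⟨hx, hxi⟩, rfl⟩
      exact ⟨⟨⟨subset_univ _, by rw [card_insert_of_notMem hx, hS']⟩, hxi⟩, subset_insert _ _⟩
  have hinj : Set.InjOn (fun x => insert x S')
      ↑(S'ᶜ.filter (fun x => ((insert x S') ∩ S).card = i)) := by
    intro x hx y hy hxy
    simp only [coe_filter, Set.mem_setOf_eq, mem_compl] at hx hy
    have : x ∈ insert y S' := by
      have hxy' : insert x S' = insert y S' := hxy
      rw [← hxy']; exact mem_insert_self x S'
    rcases mem_insert.1 this with h | h
    · exact h
    · exact absurd h hx.1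
  rw [himg, card_image_of_injOn hinj]
  by_cases h1 : i = j + 1
  · have hset : S'ᶜ.filter (fun x => ((insert x S') ∩ S).card = i) = S \ S' := by
      ext x
      simp only [mem_filter, mem_compl, mem_sdiff]
      constructor
      · rintro ⟨hx, hcard⟩
        rw [hkey x hx] at hcard
        by_cases hxS : x ∈ S
        · exact ⟨hxS, hx⟩
        · rw [if_neg hxS] at hcard; omega
      · rintro ⟨hxS, hx⟩
        exact ⟨hx, by rw [hkey x hx, if_pos hxS, h1]⟩
    rw [hset, if_pos h1, if_neg (by omega)]
    have := card_sdiff_add_card_inter S S'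
    rw [inter_comm] at this
    omega
  · by_cases h2 : i = j
    · have hset : S'ᶜ.filter (fun x => ((insert x S') ∩ S).card = i) = (S ∪ S')ᶜ := by
        ext x
        simp only [mem_filter, mem_compl, mem_union, not_or]
        constructor
        · rintro ⟨hx, hcard⟩
          rw [hkey x hx] at hcard
          by_cases hxS : x ∈ S
          · rw [if_pos hxS] at hcard; omega
          · exact ⟨hxS, hx⟩
        · rintro ⟨hxS, hx⟩
          exact ⟨hx, by rw [hkey x hx, if_neg hxS, h2]⟩
      rw [hset, if_neg h1, if_pos h2, card_compl]
      have hcu : (S ∪ S').card + (S ∩ S').card = S.card + S'.card :=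
        card_union_add_card_inter S S'
      rw [inter_comm] at hcu
      have : Fintype.card (Fin (2*b+1)) = 2*b+1 := Fintype.card_fin _
      omega
    · have hset : S'ᶜ.filter (fun x => ((insert x S') ∩ S).card = i) = ∅ := by
        ext x
        simp only [mem_filter, mem_compl, notMem_empty, iff_false, not_and]
        intro hx hcard
        rw [hkey x hx] at hcard
        by_cases hxS : x ∈ S
        · rw [if_pos hxS] at hcard; omega
        · rw [if_neg hxS] at hcard; omega
      rw [hset, if_neg h1, if_neg h2, card_empty]

private lemma scalar_cancel (b j : ℕ) (hj : j < b) :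
    ((-1 : ℚ) ^ (j+1 + b) * (((b+1) * Nat.choose b (j+1) : ℕ) : ℚ)⁻¹) * ((b - j : ℕ) : ℚ)
    + ((-1 : ℚ) ^ (j + b) * (((b+1) * Nat.choose b j : ℕ) : ℚ)⁻¹) * ((j+1 : ℕ) : ℚ) = 0 := by
  have e1 : (((b+1) * Nat.choose b (j+1) : ℕ) : ℚ) ≠ 0 :=
    Nat.cast_ne_zero.2 (Nat.mul_ne_zero (by omega) (Nat.choose_pos (by omega : j+1 ≤ b)).ne')
  have e0 : (((b+1) * Nat.choose b j : ℕ) : ℚ) ≠ 0 :=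
    Nat.cast_ne_zero.2 (Nat.mul_ne_zero (by omega) (Nat.choose_pos (by omega : j ≤ b)).ne')
  have hkey : (((b+1) * Nat.choose b (j+1) : ℕ) : ℚ) * ((j+1 : ℕ) : ℚ)
      = (((b+1) * Nat.choose b j : ℕ) : ℚ) * ((b - j : ℕ) : ℚ) := by
    rw [← Nat.cast_mul, ← Nat.cast_mul]
    congr 1
    rw [mul_assoc, Nat.choose_succ_right_eq, mul_assoc]
  have hsgn : (-1 : ℚ) ^ (j+1+b) = -(-1 : ℚ) ^ (j+b) := by
    rw [show j+1+b = (j+b)+1 from by omega, pow_succ]; ring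
  rw [hsgn]
  set s := (-1:ℚ)^(j+b) with hs
  set c1 := (((b+1) * Nat.choose b (j+1) : ℕ) : ℚ) with hc1
  set c0 := (((b+1) * Nat.choose b j : ℕ) : ℚ) with hc0
  rw [show ((j+1 : ℕ) : ℚ) = (j : ℚ) + 1 from by push_cast; ring] at hkey ⊢
  field_simp
  linear_combination s * hkey

theorem stmt4 (b : ℕ) (V : Type*) [AddCommGroup V] [Module ℚ V]
    (C : Finset (Fin (2*b+1)) → V) :
    ∀ S : Finset (Fin (2*b+1)), S.card = b →
      C S = ∑ i ∈ Finset.range (b+1),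
        ((-1 : ℚ) ^ (i + b) * (((b+1) * Nat.choose b i : ℕ) : ℚ)⁻¹) •
          ∑ T ∈ (Finset.powersetCard (b+1) (Finset.univ : Finset (Fin (2*b+1)))).filter
              (fun T => (T ∩ S).card = i),
            ∑ S' ∈ Finset.powersetCard b T, C S' := by
  intro S hS
  classical
  set w : ℕ → ℚ := fun i => (-1 : ℚ) ^ (i + b) * (((b+1) * Nat.choose b i : ℕ) : ℚ)⁻¹ with hw
  set A : ℕ → Finset (Finset (Fin (2*b+1))) := fun i =>
    (Finset.powersetCard (b+1) (Finset.univ : Finset (Fin (2*b+1)))).filter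
      (fun T => (T ∩ S).card = i) with hA
  have step1 : ∀ i, (∑ T ∈ A i, ∑ S' ∈ Finset.powersetCard b T, C S')
      = ∑ S' ∈ Finset.powersetCard b (Finset.univ : Finset (Fin (2*b+1))),
          (((A i).filter (fun T => S' ⊆ T)).card) • C S' := by
    intro i
    rw [Finset.sum_comm' (s := A i) (t := fun T => Finset.powersetCard b T)
      (t' := Finset.powersetCard b (Finset.univ : Finset (Fin (2*b+1))))
      (s' := fun S' => (A i).filter (fun T => S' ⊆ T))
      (fun T S' => by
        simp only [mem_powersetCard, mem_filter, hA, subset_univ, true_and]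
        tauto)]
    exact Finset.sum_congr rfl fun S' _ => Finset.sum_const _
  calc C S
      = ∑ S' ∈ Finset.powersetCard b (Finset.univ : Finset (Fin (2*b+1))),
          (if S' = S then (1:ℚ) else 0) • C S' := by
        have key : ∀ S' ∈ Finset.powersetCard b (Finset.univ : Finset (Fin (2*b+1))),
            (if S' = S then (1:ℚ) else 0) • C S'
              = if S' = S then (fun _ : Finset (Fin (2*b+1)) => C S) S' else 0 := by
          intro S' _
          split_ifs with h
          · rw [h, one_smul]
          · rw [zero_smul]
        rw [Finset.sum_congr rfl key, Finset.sum_ite_eq' _ S _,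
          if_pos (by simp [hS, Finset.mem_powersetCard])]
    _ = ∑ S' ∈ Finset.powersetCard b (Finset.univ : Finset (Fin (2*b+1))),
          (∑ i ∈ Finset.range (b+1), w i * (((A i).filter (fun T => S' ⊆ T)).card : ℚ)) • C S' := by
        refine Finset.sum_congr rfl fun S' hS' => ?_
        congr 1
        rw [Finset.mem_powersetCard] at hS'
        have hS'card : S'.card = b := hS'.2
        set j := (S' ∩ S).card with hjdef
        have hjb : j ≤ b := hS ▸ card_le_card inter_subset_right
        have hcount : ∀ i, (((A i).filter (fun T => S' ⊆ T)).card : ℚ)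
            = (if i = j + 1 then ((b - j : ℕ) : ℚ) else 0)
              + (if i = j then ((j+1 : ℕ) : ℚ) else 0) := by
          intro i
          rw [hA, count_aux b S S' hS hS'card i]
          simp only [Nat.cast_add, Nat.cast_ite, Nat.cast_zero]
          rfl
        simp_rw [hcount, mul_add, Finset.sum_add_distrib, mul_ite, mul_zero]
        rw [Finset.sum_ite_eq' (Finset.range (b+1)) (j+1) (fun i => w i * ((b - j : ℕ) : ℚ)),
          Finset.sum_ite_eq' (Finset.range (b+1)) j (fun i => w i * ((j+1 : ℕ) : ℚ))]
        by_cases hSS : S' = S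
        · have hjb' : j = b := by rw [hjdef, hSS, inter_self, hS]
          rw [if_pos hSS, if_neg (by simp [Finset.mem_range, hjb']),
            if_pos (Finset.mem_range.2 (by omega)), zero_add, hjb', hw]
          simp only [Nat.choose_self, mul_one]
          have he : (-1 : ℚ) ^ (b + b) = 1 := Even.neg_one_pow ⟨b, rfl⟩
          rw [he, one_mul]
          push_cast
          field_simp
        · have hjlt : j < b := by
            rcases lt_or_eq_of_le hjb with h | h
            · exact h
            · exfalso
              have hj' : (S' ∩ S).card = b := hjdef ▸ h
              have hsub : S' ∩ S = S' := Finset.eq_of_subset_of_card_le inter_subset_left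
                (by omega)
              have hsub2 : S' ⊆ S := hsub ▸ inter_subset_right
              exact hSS (Finset.eq_of_subset_of_card_le hsub2 (by omega))
          rw [if_neg hSS, if_pos (Finset.mem_range.2 (by omega)),
            if_pos (Finset.mem_range.2 (by omega))]
          exact (scalar_cancel b j hjlt).symm
    _ = ∑ i ∈ Finset.range (b+1), w i •
          ∑ T ∈ A i, ∑ S' ∈ Finset.powersetCard b T, C S' := by
        simp_rw [step1, Finset.smul_sum, Finset.sum_smul]
        rw [Finset.sum_comm]
        refine Finset.sum_congr rfl fun S' _ => Finset.sum_congr rfl fun i _ => ?_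
        rw [← Nat.cast_smul_eq_nsmul ℚ, smul_smul]
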